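/- Weighted zeroth- and first-order bounds for the profile W̄: Let W̄ : ℝ³ → ℝ be defined by W̄(y) = B(y̌)^{−1/2} W₁d( B(y̌)^{3/2} y₁ ), where y̌ = (y₂,y₃) and B(y̌) = 1/(1 + y₂² + y₃²). Then for every y ∈ ℝ³: (i) |W̄(y)| ≤ η(y)^{1/6}; (ii) −1 ≤ ∂₁W̄(y) ≤ 0; (iii) |∂₁W̄(y)| ≤ η̃(y)^{−1/3}; (iv) the Euclidean norm of ∇̌W̄(y) = (∂₂W̄(y), ∂₃W̄(y)) is at most 2/3. Here η(y) = 1 + y₁² + |y̌|⁶ and η̃(y) = 1 + y₁² + |y̌|² + |y̌|⁶. -/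

import Mathlib

set_option maxHeartbeats 1000000

noncomputable section

/-- Points of self-similar space `ℝ³`. -/
abbrev V3 : Type := Fin 3 → ℝ

/-- Spatial partial derivative `∂ⱼ g` of a scalar function on `ℝ³`. -/
def pdS (j : Fin 3) (g : V3 → ℝ) (x : V3) : ℝ :=
  fderiv ℝ g x (Pi.single j 1 : V3)

/-- The stable self-similar profile of the 1D Burgers equation. -/
def W1d (y : ℝ) : ℝ :=
  (-y / 2 + Real.sqrt (1 / 27 + y ^ 2 / 4)) ^ ((1 : ℝ) / 3)
    - (y / 2 + Real.sqrt (1 / 27 + y ^ 2 / 4)) ^ ((1 : ℝ) / 3)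

/-- `B(y̌) = 1/(1 + y₂² + y₃²)`. -/
def Bf (y : V3) : ℝ := 1 / (1 + y 1 ^ 2 + y 2 ^ 2)

/-- The explicit 3D self-similar Burgers profile
`W̄(y) = B(y̌)^{−1/2} W₁d(B(y̌)^{3/2} y₁)`. -/
def Wbar (y : V3) : ℝ :=
  Bf y ^ (-(1 : ℝ) / 2) * W1d (Bf y ^ ((3 : ℝ) / 2) * y 0)

/-- The weight `η(y) = 1 + y₁² + |y̌|⁶`. -/
def etaW (y : V3) : ℝ := 1 + y 0 ^ 2 + (y 1 ^ 2 + y 2 ^ 2) ^ 3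

/-- The modified weight `η̃(y) = 1 + y₁² + |y̌|² + |y̌|⁶`. -/
def etaT (y : V3) : ℝ :=
  1 + y 0 ^ 2 + (y 1 ^ 2 + y 2 ^ 2) + (y 1 ^ 2 + y 2 ^ 2) ^ 3

namespace BurgersAux

/-! ### 1D analysis of `W1d` -/

def sf (y : ℝ) : ℝ := Real.sqrt (1 / 27 + y ^ 2 / 4)
lemma sf_pos (y : ℝ) : 0 < sf y := Real.sqrt_pos.2 (by positivity)
lemma sf_sq (y : ℝ) : sf y ^ 2 = 1 / 27 + y ^ 2 / 4 := Real.sq_sqrt (by positivity)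
lemma half_lt_sf (y : ℝ) : |y| / 2 < sf y := by
  have h1 : |y| / 2 = Real.sqrt (y ^ 2 / 4) := by
    rw [show y ^ 2 / 4 = (|y| / 2) ^ 2 by rw [div_pow, sq_abs]; norm_num,
      Real.sqrt_sq (by positivity)]
  rw [h1]; exact Real.sqrt_lt_sqrt (by positivity) (by norm_num)
lemma ub_pos (y : ℝ) : 0 < -y / 2 + sf y := by
  nlinarith [half_lt_sf y, le_abs_self y, neg_abs_le y]
lemma vb_pos (y : ℝ) : 0 < y / 2 + sf y := by
  nlinarith [half_lt_sf y, le_abs_self y, neg_abs_le y]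
def u (y : ℝ) : ℝ := (-y / 2 + sf y) ^ ((1 : ℝ) / 3)
def v (y : ℝ) : ℝ := (y / 2 + sf y) ^ ((1 : ℝ) / 3)
lemma u_pos (y : ℝ) : 0 < u y := Real.rpow_pos_of_pos (ub_pos y) _
lemma v_pos (y : ℝ) : 0 < v y := Real.rpow_pos_of_pos (vb_pos y) _
lemma cube_rpow_third {x : ℝ} (hx : 0 ≤ x) : (x ^ ((1:ℝ)/3)) ^ 3 = x := by
  rw [← Real.rpow_natCast (x ^ ((1:ℝ)/3)) 3, ← Real.rpow_mul hx]; norm_num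
lemma u_cube (y : ℝ) : u y ^ 3 = -y / 2 + sf y := cube_rpow_third (ub_pos y).le
lemma v_cube (y : ℝ) : v y ^ 3 = y / 2 + sf y := cube_rpow_third (vb_pos y).le
lemma uv (y : ℝ) : u y * v y = 1 / 3 := by
  have h : u y * v y = ((-y / 2 + sf y) * (y / 2 + sf y)) ^ ((1:ℝ)/3) :=
    (Real.mul_rpow (ub_pos y).le (vb_pos y).le).symm
  have h2 : (-y / 2 + sf y) * (y / 2 + sf y) = 1 / 27 := by
    have := sf_sq y; nlinarith
  rw [h, h2, show (1:ℝ)/27 = ((1:ℝ)/3) ^ (3:ℕ) by norm_num,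
    ← Real.rpow_natCast ((1:ℝ)/3) 3, ← Real.rpow_mul (by norm_num)]
  norm_num
lemma W1d_eq (y : ℝ) : W1d y = u y - v y := rfl
lemma W1d_cubic (y : ℝ) : W1d y ^ 3 + W1d y + y = 0 := by
  rw [W1d_eq]
  linear_combination u_cube y - v_cube y - 3 * (u y - v y) * uv y
lemma hasDerivAt_sf (y : ℝ) : HasDerivAt sf (y / (4 * sf y)) y := by
  have hin : HasDerivAt (fun y : ℝ => 1 / 27 + y ^ 2 / 4) (y / 2) y := by
    have h := ((hasDerivAt_pow 2 y).div_const 4).const_add (1/27 : ℝ)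
    refine h.congr_deriv ?_
    push_cast; ring
  have hs := (Real.hasDerivAt_sqrt (x := 1 / 27 + y ^ 2 / 4) (by positivity)).comp y hin
  refine hs.congr_deriv (Eq.symm ?_)
  show y / (4 * sf y) = 1 / (2 * sf y) * (y / 2)
  field_simp [sf, (sf_pos y).ne']
  ring
lemma hasDerivAt_u (y : ℝ) : HasDerivAt u (-(u y) / (6 * sf y)) y := by
  have hin : HasDerivAt (fun y : ℝ => -y / 2 + sf y) (-1/2 + y / (4 * sf y)) y := by
    have h1 : HasDerivAt (fun y : ℝ => -y / 2) (-1/2) y := by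
      simpa using ((hasDerivAt_id y).neg.div_const 2)
    exact h1.add (hasDerivAt_sf y)
  have hout := (Real.hasDerivAt_rpow_const (x := -y/2 + sf y) (p := (1:ℝ)/3)
    (Or.inl (ub_pos y).ne')).comp y hin
  refine hout.congr_deriv ?_
  have hb := ub_pos y
  have hb3 : ((-y/2 + sf y) : ℝ) ^ ((1:ℝ)/3 - 1) = u y / (-y/2 + sf y) := by
    rw [Real.rpow_sub hb, Real.rpow_one]; rfl
  have hs := sf_pos y
  rw [hb3, show (-1:ℝ)/2 + y/(4*sf y) = -((-y/2 + sf y)) / (2 * sf y) by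
    field_simp; ring]
  set b := -y/2 + sf y with hbdef
  set t := sf y with htdef
  field_simp
  ring
lemma hasDerivAt_v (y : ℝ) : HasDerivAt v (v y / (6 * sf y)) y := by
  have hin : HasDerivAt (fun y : ℝ => y / 2 + sf y) (1/2 + y / (4 * sf y)) y := by
    have h1 : HasDerivAt (fun y : ℝ => y / 2) (1/2) y := by
      simpa using ((hasDerivAt_id y).div_const 2)
    exact h1.add (hasDerivAt_sf y)
  have hout := (Real.hasDerivAt_rpow_const (x := y/2 + sf y) (p := (1:ℝ)/3)
    (Or.inl (vb_pos y).ne')).comp y hin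
  refine hout.congr_deriv ?_
  have hb := vb_pos y
  have hb3 : ((y/2 + sf y) : ℝ) ^ ((1:ℝ)/3 - 1) = v y / (y/2 + sf y) := by
    rw [Real.rpow_sub hb, Real.rpow_one]; rfl
  have hs := sf_pos y
  rw [hb3, show (1:ℝ)/2 + y/(4*sf y) = ((y/2 + sf y)) / (2 * sf y) by
    field_simp; ring]
  set b := y/2 + sf y with hbdef
  set t := sf y with htdef
  field_simp
  ring
lemma hasDerivAt_W1d (y : ℝ) :
    HasDerivAt W1d (-(1 + 3 * W1d y ^ 2)⁻¹) y := by
  have h := (hasDerivAt_u y).sub (hasDerivAt_v y)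
  have heq : -(u y) / (6 * sf y) - v y / (6 * sf y) = -(1 + 3 * W1d y ^ 2)⁻¹ := by
    have key : (u y + v y) * (1 + 3 * (u y - v y) ^ 2) = 6 * sf y := by
      linear_combination 3 * u_cube y + 3 * v_cube y - 3 * (u y + v y) * uv y
    have h2 : (u y + v y) / (6 * sf y) = (1 + 3 * (u y - v y) ^ 2)⁻¹ := by
      rw [← key, div_mul_cancel_left₀ (add_pos (u_pos y) (v_pos y)).ne']
    rw [W1d_eq, ← h2]
    ring
  exact heq ▸ h

/-! ### 3D analysis of `Wbar` -/

def Q (y : V3) : ℝ := 1 + y 1 ^ 2 + y 2 ^ 2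
lemma Q_pos (y : V3) : 0 < Q y := by unfold Q; positivity
lemma one_le_Q (y : V3) : 1 ≤ Q y := by
  unfold Q; nlinarith [sq_nonneg (y 1), sq_nonneg (y 2)]

lemma Wbar_eq (y : V3) :
    Wbar y = (Q y) ^ ((1:ℝ)/2) * W1d ((Q y) ^ (-(3:ℝ)/2) * y 0) := by
  have hB : Bf y = (Q y)⁻¹ := one_div _
  have h1 : Bf y ^ (-(1:ℝ)/2) = (Q y) ^ ((1:ℝ)/2) := by
    rw [hB, ← Real.rpow_neg_one (Q y), ← Real.rpow_mul (Q_pos y).le]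
    norm_num
  have h2 : Bf y ^ ((3:ℝ)/2) = (Q y) ^ (-(3:ℝ)/2) := by
    rw [hB, ← Real.rpow_neg_one (Q y), ← Real.rpow_mul (Q_pos y).le]
    norm_num
  rw [Wbar, h1, h2]

def pr (i : Fin 3) : V3 →L[ℝ] ℝ := ContinuousLinearMap.proj i

lemma hQ' (y : V3) : HasFDerivAt Q ((2 * y 1) • pr 1 + (2 * y 2) • pr 2) y := by
  have h1 : HasFDerivAt (fun y : V3 => y 1) (pr 1) y := (pr 1).hasFDerivAt
  have h2 : HasFDerivAt (fun y : V3 => y 2) (pr 2) y := (pr 2).hasFDerivAt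
  have h1s := (hasDerivAt_pow 2 (y 1)).comp_hasFDerivAt y h1
  have h2s := (hasDerivAt_pow 2 (y 2)).comp_hasFDerivAt y h2
  have h := (h1s.const_add 1).add h2s
  refine h.congr_fderiv ?_
  push_cast
  module

theorem hasFDerivAt_Wbar (y : V3) :
    HasFDerivAt Wbar
      ((W1d ((Q y) ^ (-(3:ℝ)/2) * y 0)) • (((1:ℝ)/2 * (Q y) ^ ((1:ℝ)/2 - 1)) • ((2 * y 1) • pr 1 + (2 * y 2) • pr 2))
        + ((Q y) ^ ((1:ℝ)/2)) •
          ((-(1 + 3 * W1d ((Q y) ^ (-(3:ℝ)/2) * y 0) ^ 2)⁻¹) •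
            (((Q y) ^ (-(3:ℝ)/2)) • pr 0
              + (y 0) • ((-(3:ℝ)/2 * (Q y) ^ (-(3:ℝ)/2 - 1)) • ((2 * y 1) • pr 1 + (2 * y 2) • pr 2))))) y := by
  have hQp := Q_pos y
  have hQd := hQ' y
  have hout := (Real.hasDerivAt_rpow_const (x := Q y) (p := (1:ℝ)/2)
    (Or.inl hQp.ne')).comp_hasFDerivAt y hQd
  have hg2 := (Real.hasDerivAt_rpow_const (x := Q y) (p := -(3:ℝ)/2)
    (Or.inl hQp.ne')).comp_hasFDerivAt y hQd
  have h0 : HasFDerivAt (fun y : V3 => y 0) (pr 0) y := (pr 0).hasFDerivAt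
  have hz := hg2.mul h0
  have hw := (hasDerivAt_W1d ((Q y) ^ (-(3:ℝ)/2) * y 0)).comp_hasFDerivAt y hz
  have hprod := hout.mul hw
  have h : HasFDerivAt (fun y : V3 => (Q y) ^ ((1:ℝ)/2) * W1d ((Q y) ^ (-(3:ℝ)/2) * y 0)) _ y := hprod
  refine (h.congr_of_eventuallyEq (Filter.Eventually.of_forall fun z => Wbar_eq z)).congr_fderiv ?_
  simp only [Function.comp_apply]
  abel

/-! ### rpow bookkeeping -/

lemma e_sq {q : ℝ} (hq : 0 < q) : (q ^ ((1:ℝ)/2)) ^ 2 = q := by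
  rw [← Real.rpow_natCast (q ^ ((1:ℝ)/2)) 2, ← Real.rpow_mul hq.le]; norm_num
lemma rpow_m32 {q : ℝ} (hq : 0 < q) : q ^ (-(3:ℝ)/2) = ((q ^ ((1:ℝ)/2)) ^ 3)⁻¹ := by
  rw [← Real.rpow_natCast (q ^ ((1:ℝ)/2)) 3, ← Real.rpow_mul hq.le,
    ← Real.rpow_neg hq.le]
  norm_num
lemma rpow_m52 {q : ℝ} (hq : 0 < q) : q ^ (-(5:ℝ)/2) = ((q ^ ((1:ℝ)/2)) ^ 5)⁻¹ := by
  rw [← Real.rpow_natCast (q ^ ((1:ℝ)/2)) 5, ← Real.rpow_mul hq.le,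
    ← Real.rpow_neg hq.le]
  norm_num
lemma rpow_m12 {q : ℝ} (hq : 0 < q) : q ^ (-(1:ℝ)/2) = (q ^ ((1:ℝ)/2))⁻¹ := by
  rw [← Real.rpow_neg hq.le]
  norm_num

end BurgersAux


open BurgersAux

/-- Weighted zeroth- and first-order bounds for the profile `W̄`:
`|W̄| ≤ η^{1/6}`, `−1 ≤ ∂₁W̄ ≤ 0`, `|∂₁W̄| ≤ η̃^{−1/3}`, and `|∇̌W̄| ≤ 2/3`. -/
theorem Wbar_weighted_first_order_bounds (y : V3) :
    |Wbar y| ≤ etaW y ^ ((1 : ℝ) / 6) ∧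
    -1 ≤ pdS 0 Wbar y ∧ pdS 0 Wbar y ≤ 0 ∧
    |pdS 0 Wbar y| ≤ etaT y ^ (-(1 : ℝ) / 3) ∧
    Real.sqrt (pdS 1 Wbar y ^ 2 + pdS 2 Wbar y ^ 2) ≤ 2 / 3 := by
  have hQp := Q_pos y
  have hQ1 := one_le_Q y
  set q : ℝ := Q y with hqdef
  set e : ℝ := q ^ ((1:ℝ)/2) with hedef
  set w : ℝ := W1d (q ^ (-(3:ℝ)/2) * y 0) with hwdef
  have hepos : 0 < e := Real.rpow_pos_of_pos hQp _
  have he : e ^ 2 = q := e_sq hQp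
  have he1 : 1 ≤ e := by nlinarith
  have hWb : Wbar y = e * w := Wbar_eq y
  have hw' : W1d ((e ^ 3)⁻¹ * y 0) = w := by
    rw [hwdef, rpow_m32 hQp, ← hedef]
  -- cubic relation
  have hy0 : y 0 = -(e ^ 3) * (w ^ 3 + w) := by
    have hc := W1d_cubic (q ^ (-(3:ℝ)/2) * y 0)
    rw [← hwdef] at hc
    rw [rpow_m32 hQp, ← hedef] at hc
    have he3 : (e:ℝ) ^ 3 ≠ 0 := by positivity
    field_simp at hc
    linarith
  have hden : (0:ℝ) < 1 + 3 * w ^ 2 := by positivity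
  have hDpos : (0:ℝ) < q + 3 * Wbar y ^ 2 := by
    rw [hWb]; nlinarith [sq_nonneg (e*w)]
  -- partial derivatives
  have hW := hasFDerivAt_Wbar y
  have hpd0 : pdS 0 Wbar y = -(q + 3 * Wbar y ^ 2)⁻¹ := by
    rw [show pdS 0 Wbar y = _ from congrFun (congrArg _ hW.fderiv) _]
    simp only [ContinuousLinearMap.add_apply, ContinuousLinearMap.smul_apply, pr,
      ContinuousLinearMap.proj_apply, Pi.single_apply]
    norm_num [Fin.ext_iff]
    rw [show ((-(3/2)):ℝ) = -(3:ℝ)/2 by norm_num, ← hqdef, rpow_m32 hQp, ← hedef, hw', hWb, ← he]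
    field_simp
  have hpd1 : pdS 1 Wbar y = -(2 * y 1 * Wbar y) * (q + 3 * Wbar y ^ 2)⁻¹ := by
    rw [show pdS 1 Wbar y = _ from congrFun (congrArg _ hW.fderiv) _]
    simp only [ContinuousLinearMap.add_apply, ContinuousLinearMap.smul_apply, pr,
      ContinuousLinearMap.proj_apply, Pi.single_apply]
    norm_num [Fin.ext_iff]
    rw [show ((-(3/2)):ℝ) = -(3:ℝ)/2 by norm_num, show ((-(5/2)):ℝ) = -(5:ℝ)/2 by norm_num,
      show ((-(1/2)):ℝ) = -(1:ℝ)/2 by norm_num, ← hqdef,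
      rpow_m32 hQp, rpow_m52 hQp, rpow_m12 hQp, ← hedef, hw', hWb, ← he, hy0]
    field_simp
    ring
  have hpd2 : pdS 2 Wbar y = -(2 * y 2 * Wbar y) * (q + 3 * Wbar y ^ 2)⁻¹ := by
    rw [show pdS 2 Wbar y = _ from congrFun (congrArg _ hW.fderiv) _]
    simp only [ContinuousLinearMap.add_apply, ContinuousLinearMap.smul_apply, pr,
      ContinuousLinearMap.proj_apply, Pi.single_apply]
    norm_num [Fin.ext_iff]
    rw [show ((-(3/2)):ℝ) = -(3:ℝ)/2 by norm_num, show ((-(5/2)):ℝ) = -(5:ℝ)/2 by norm_num,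
      show ((-(1/2)):ℝ) = -(1:ℝ)/2 by norm_num, ← hqdef,
      rpow_m32 hQp, rpow_m52 hQp, rpow_m12 hQp, ← hedef, hw', hWb, ← he, hy0]
    field_simp
    ring
  clear hW
  clear_value w e q
  -- abbreviations
  have hD1 : (1:ℝ) ≤ q + 3 * Wbar y ^ 2 := by nlinarith [sq_nonneg (Wbar y)]
  have hcube : Wbar y ^ 3 + q * Wbar y + y 0 = 0 := by
    rw [hWb]; linear_combination hy0 - (e * w) * he
  have hy0' : y 0 = -(Wbar y ^ 3 + q * Wbar y) := by linarith
  refine ⟨?_, ?_, ?_, ?_, ?_⟩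
  · -- |Wbar| ≤ etaW ^ (1/6)
    have h6 : Wbar y ^ 6 ≤ etaW y := by
      have hE : etaW y = 1 + (Wbar y ^ 3 + q * Wbar y) ^ 2 + (q - 1) ^ 3 := by
        rw [etaW, hy0', hqdef]; unfold Q; ring
      have hq30 : (0:ℝ) ≤ (q - 1) ^ 3 := pow_nonneg (by linarith) 3
      nlinarith [mul_nonneg hQp.le (sq_nonneg (Wbar y ^ 2)),
        mul_nonneg (mul_nonneg hQp.le hQp.le) (sq_nonneg (Wbar y))]
    have hW6 : |Wbar y| ^ (6:ℕ) ≤ etaW y := by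
      rw [pow_abs, abs_of_nonneg (by positivity : (0:ℝ) ≤ Wbar y ^ 6)]
      exact h6
    calc |Wbar y| = (|Wbar y| ^ (6:ℕ)) ^ ((1:ℝ)/6) := by
          rw [← Real.rpow_natCast |Wbar y| 6, ← Real.rpow_mul (abs_nonneg _)]
          norm_num
      _ ≤ etaW y ^ ((1:ℝ)/6) := Real.rpow_le_rpow (by positivity) hW6 (by norm_num)
  · rw [hpd0]
    have h1 : (q + 3 * Wbar y ^ 2)⁻¹ ≤ 1 := by
      rw [inv_le_one_iff₀]
      right; exact hD1
    linarith
  · rw [hpd0]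
    simp only [neg_nonpos]
    exact inv_nonneg.2 hDpos.le
  · -- |pd0| ≤ etaT ^ (-(1)/3)
    rw [hpd0, abs_neg, abs_inv, abs_of_pos hDpos]
    have hT1 : (1:ℝ) ≤ etaT y := by
      rw [etaT]
      nlinarith [sq_nonneg (y 0), sq_nonneg (y 1), sq_nonneg (y 2),
        pow_nonneg (by positivity : (0:ℝ) ≤ y 1 ^ 2 + y 2 ^ 2) 3]
    have hTpos : (0:ℝ) < etaT y := by linarith
    have hA : (e^2-1)^3 + (e^2-1) + 1 ≤ e^6 := by
      nlinarith [mul_nonneg (by nlinarith : (0:ℝ) ≤ 3*e^2-1) (by nlinarith : (0:ℝ) ≤ e^2-1)]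
    have hB : (w^3+w)^2 ≤ (1+3*w^2)^3 - 1 := by
      nlinarith [sq_nonneg w, sq_nonneg (w^2), sq_nonneg (w^3),
        mul_nonneg (sq_nonneg w) (sq_nonneg (w^2))]
    have hetaT : etaT y ≤ (q + 3 * Wbar y ^ 2) ^ 3 := by
      have h1 : etaT y = 1 + y 0 ^ 2 + (q-1) + (q-1)^3 := by
        rw [etaT, hqdef]; unfold Q; ring
      rw [h1, hy0, hWb, ← he]
      have hBmul := mul_le_mul_of_nonneg_left hB (by positivity : (0:ℝ) ≤ e^6)
      nlinarith [hA, hBmul]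
    have hcb : ((q + 3 * Wbar y ^ 2) ^ (3:ℕ)) ^ ((1:ℝ)/3) = q + 3 * Wbar y ^ 2 := by
      rw [← Real.rpow_natCast (q + 3 * Wbar y ^ 2) 3, ← Real.rpow_mul hDpos.le]
      norm_num
    have hle : etaT y ^ ((1:ℝ)/3) ≤ q + 3 * Wbar y ^ 2 := by
      calc etaT y ^ ((1:ℝ)/3) ≤ ((q + 3 * Wbar y ^ 2) ^ (3:ℕ)) ^ ((1:ℝ)/3) :=
            Real.rpow_le_rpow hTpos.le (by exact_mod_cast hetaT) (by norm_num)
        _ = q + 3 * Wbar y ^ 2 := hcb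
    rw [show (-(1:ℝ)/3) = -((1:ℝ)/3) by norm_num, Real.rpow_neg hTpos.le]
    exact inv_anti₀ (Real.rpow_pos_of_pos hTpos _) hle
  · -- gradient bound
    rw [hpd1, hpd2]
    have hD2 : (0:ℝ) < (q + 3 * Wbar y ^ 2) ^ 2 := by positivity
    have key : (-(2 * y 1 * Wbar y)) ^ 2 + (-(2 * y 2 * Wbar y)) ^ 2 ≤
        (2/3)^2 * (q + 3 * Wbar y ^ 2) ^ 2 := by
      have hq' : q = 1 + y 1 ^ 2 + y 2 ^ 2 := hqdef
      rw [hq']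
      nlinarith [sq_nonneg (2*(y 1 ^ 2 + y 2 ^ 2) - 3 * Wbar y ^ 2), sq_nonneg (Wbar y),
        sq_nonneg (Wbar y ^ 2), sq_nonneg (y 1), sq_nonneg (y 2),
        mul_nonneg (sq_nonneg (y 1)) (sq_nonneg (Wbar y)),
        mul_nonneg (sq_nonneg (y 2)) (sq_nonneg (Wbar y))]
    have hsum : (-(2 * y 1 * Wbar y) * (q + 3 * Wbar y ^ 2)⁻¹) ^ 2
        + (-(2 * y 2 * Wbar y) * (q + 3 * Wbar y ^ 2)⁻¹) ^ 2 ≤ (2/3)^2 := by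
      rw [mul_pow, mul_pow, ← add_mul, inv_pow, ← div_eq_mul_inv, div_le_iff₀ hD2]
      exact key
    calc Real.sqrt ((-(2 * y 1 * Wbar y) * (q + 3 * Wbar y ^ 2)⁻¹) ^ 2
          + (-(2 * y 2 * Wbar y) * (q + 3 * Wbar y ^ 2)⁻¹) ^ 2)
        ≤ Real.sqrt ((2/3)^2) := Real.sqrt_le_sqrt hsum
      _ = 2/3 := Real.sqrt_sq (by norm_num)
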